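/- Let a ∈ S_{k,ℓ} with grid function γ_a. Then the grid-valuation matrix V_a = (v_{ij}) defined by v_{ij} = a_{γ_a^{-1}(ℓ+1-i, j)} is a standard Young tableau of rectangular shape ℓ×k: its entries are {1,...,kℓ} and each row and column is increasing. -/

import Mathlib

/-- Length of the longest decreasing subsequence of `a` ending at the `t`-th
entry (1-based) of `a`. -/
noncomputable def gridI (a : List ℕ) (t : ℕ) : ℕ :=
  sSup {r | ∃ s : List ℕ, s.Sublist (a.take t) ∧ s.length = r ∧
    s.getLast? = a[t-1]? ∧ s.Pairwise (· > ·)}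

/-- Length of the longest increasing subsequence of `a` ending at the `t`-th
entry (1-based) of `a`. -/
noncomputable def gridJ (a : List ℕ) (t : ℕ) : ℕ :=
  sSup {r | ∃ s : List ℕ, s.Sublist (a.take t) ∧ s.length = r ∧
    s.getLast? = a[t-1]? ∧ s.Pairwise (· < ·)}

/-- `M`, restricted to `{1,…,ℓ} × {1,…,k}`, is a standard Young tableau of
rectangular shape `ℓ × k`: its entries are exactly `{1,…,kℓ}` and every row
and every column is strictly increasing. -/
def IsSYT (ℓ k : ℕ) (M : ℕ → ℕ → ℕ) : Prop :=
  Set.BijOn (fun p : ℕ × ℕ => M p.1 p.2)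
    (↑(Finset.Icc 1 ℓ ×ˢ Finset.Icc 1 k) : Set (ℕ × ℕ))
    (↑(Finset.Icc 1 (k*ℓ)) : Set ℕ) ∧
  (∀ i ∈ Finset.Icc 1 ℓ, ∀ j ∈ Finset.Icc 1 k, ∀ j' ∈ Finset.Icc 1 k,
    j < j' → M i j < M i j') ∧
  (∀ i ∈ Finset.Icc 1 ℓ, ∀ i' ∈ Finset.Icc 1 ℓ, ∀ j ∈ Finset.Icc 1 k,
    i < i' → M i j < M i' j)

section GridHelpers

/-- generic grid set -/
def gridSet (R : ℕ → ℕ → Prop) (a : List ℕ) (t : ℕ) : Set ℕ :=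
  {r | ∃ s : List ℕ, s.Sublist (a.take t) ∧ s.length = r ∧
    s.getLast? = a[t-1]? ∧ s.Pairwise R}

lemma gridI_eq (a : List ℕ) (t : ℕ) : gridI a t = sSup (gridSet (· > ·) a t) := rfl

lemma gridJ_eq (a : List ℕ) (t : ℕ) : gridJ a t = sSup (gridSet (· < ·) a t) := rfl

variable {R : ℕ → ℕ → Prop} {a : List ℕ} {t t' : ℕ}

private lemma mem_of_getLast?' : ∀ {s : List ℕ} {y : ℕ}, s.getLast? = some y → y ∈ s := by
  intro s
  induction s with
  | nil => intro y hy; simp at hy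
  | cons c cs ih =>
    intro y hy
    cases cs with
    | nil =>
      simp only [List.getLast?_singleton, Option.some.injEq] at hy
      simp [hy]
    | cons d ds =>
      rw [List.getLast?_cons_cons] at hy
      exact List.mem_cons_of_mem _ (ih hy)

private lemma sorted_last_rel :
    ∀ {s : List ℕ} {y : ℕ}, s.Pairwise R → s.getLast? = some y →
    ∀ b ∈ s, b = y ∨ R b y := by
  intro s
  induction s with
  | nil => intro y _ hy; simp at hy
  | cons c cs ih =>
    intro y hs hy b hb
    cases cs with
    | nil =>
      simp only [List.getLast?_singleton, Option.some.injEq] at hy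
      simp only [List.mem_singleton] at hb
      left; omega
    | cons d ds =>
      rw [List.getLast?_cons_cons] at hy
      rcases List.mem_cons.1 hb with rfl | hb'
      · right
        have hy' : y ∈ d :: ds := mem_of_getLast?' hy
        exact (List.pairwise_cons.1 hs).1 y hy'
      · exact ih hs.of_cons hy b hb'

private lemma take_decomp (h1 : 1 ≤ t) (h2 : t ≤ a.length) :
    a.take t = a.take (t-1) ++ [a.getD (t-1) 0] := by
  have h3 : t - 1 < a.length := by omega
  conv_lhs => rw [show t = (t-1)+1 by omega]
  rw [List.take_succ, List.getElem?_eq_getElem h3]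
  rw [List.getD_eq_getElem?_getD, List.getElem?_eq_getElem h3]
  rfl

private lemma getElem?_eq_getD (h1 : 1 ≤ t) (h2 : t ≤ a.length) :
    a[t-1]? = some (a.getD (t-1) 0) := by
  have h3 : t - 1 < a.length := by omega
  rw [List.getElem?_eq_getElem h3, List.getD_eq_getElem?_getD,
    List.getElem?_eq_getElem h3]
  rfl

lemma gridSet_one_mem (h1 : 1 ≤ t) (h2 : t ≤ a.length) : 1 ∈ gridSet R a t := by
  refine ⟨[a.getD (t-1) 0], ?_, rfl, ?_, List.pairwise_singleton _ _⟩
  · rw [List.singleton_sublist, take_decomp h1 h2]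
    simp
  · rw [getElem?_eq_getD h1 h2]; rfl

lemma gridSet_bddAbove : BddAbove (gridSet R a t) := by
  refine ⟨t, fun x hx => ?_⟩
  obtain ⟨s, hsub, hlen, -, -⟩ := hx
  calc x = s.length := hlen.symm
    _ ≤ (a.take t).length := hsub.length_le
    _ ≤ t := by simp

lemma gridSet_sSup_mem (h1 : 1 ≤ t) (h2 : t ≤ a.length) :
    sSup (gridSet R a t) ∈ gridSet R a t :=
  Nat.sSup_mem ⟨1, gridSet_one_mem h1 h2⟩ gridSet_bddAbove

lemma gridSet_sSup_pos (h1 : 1 ≤ t) (h2 : t ≤ a.length) :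
    1 ≤ sSup (gridSet R a t) :=
  le_csSup gridSet_bddAbove (gridSet_one_mem h1 h2)

lemma gridSet_sSup_le {m : ℕ} (h1 : 1 ≤ t) (h2 : t ≤ a.length)
    (hno : ¬ ∃ s : List ℕ, s.Sublist a ∧ s.length = m+1 ∧ s.Pairwise R) :
    sSup (gridSet R a t) ≤ m := by
  refine csSup_le ⟨1, gridSet_one_mem h1 h2⟩ (fun x hx => ?_)
  obtain ⟨s, hsub, hlen, -, hsort⟩ := hx
  by_contra hxm
  push_neg at hxm
  refine hno ⟨s.take (m+1), ?_, ?_, hsort.sublist (List.take_sublist _ _)⟩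
  · exact ((List.take_sublist _ _).trans hsub).trans (List.take_sublist _ _)
  · rw [List.length_take]; omega

/-- The key step lemma. -/
lemma gridSet_sSup_lt (htrans : Transitive R) (h1 : 1 ≤ t) (ht : t < t')
    (h2 : t' ≤ a.length) (hR : R (a.getD (t-1) 0) (a.getD (t'-1) 0)) :
    sSup (gridSet R a t) < sSup (gridSet R a t') := by
  obtain ⟨s, hsub, hlen, hlast, hsort⟩ :=
    gridSet_sSup_mem (R := R) (a := a) (t := t) h1 (show t ≤ a.length by omega)
  set x := a.getD (t'-1) 0 with hx
  have hmem : sSup (gridSet R a t) + 1 ∈ gridSet R a t' := by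
    refine ⟨s ++ [x], ?_, by simp [hlen], ?_, ?_⟩
    · rw [take_decomp (t := t') (by omega) h2]
      refine List.Sublist.append ?_ (List.Sublist.refl _)
      refine hsub.trans ?_
      have h4 := List.take_sublist t (a.take (t'-1))
      rwa [List.take_take, min_eq_left (by omega)] at h4
    · rw [List.getLast?_concat, getElem?_eq_getD (by omega) h2]
    · rw [List.pairwise_append]
      refine ⟨hsort, List.pairwise_singleton _ _, fun b hb c hc => ?_⟩
      rw [List.mem_singleton] at hc
      subst hc
      have hy : s.getLast? = some (a.getD (t-1) 0) := by
        rw [hlast]; exact getElem?_eq_getD h1 (by omega)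
      rcases sorted_last_rel hsort hy b hb with rfl | hby
      · exact hR
      · exact htrans hby hR
  have h5 := le_csSup (gridSet_bddAbove (R := R) (a := a) (t := t')) hmem
  omega

end GridHelpers

theorem grid_valuation_is_SYT (k ℓ : ℕ) (a : List ℕ)
    (hperm : a.Perm (List.range' 1 (k*ℓ)))
    (hinc : ¬ ∃ s : List ℕ, s.Sublist a ∧ s.length = k+1 ∧ s.Pairwise (· < ·))
    (hdec : ¬ ∃ s : List ℕ, s.Sublist a ∧ s.length = ℓ+1 ∧ s.Pairwise (· > ·))
    (r : ℕ → ℕ → ℕ)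
    (hr : ∀ i ∈ Finset.Icc 1 ℓ, ∀ j ∈ Finset.Icc 1 k,
      r i j ∈ Finset.Icc 1 (k*ℓ) ∧ gridI a (r i j) = i ∧ gridJ a (r i j) = j) :
    IsSYT ℓ k (fun i j => a.getD (r (ℓ+1-i) j - 1) 0) := by
  set n := k * ℓ with hn
  have hlen : a.length = n := by
    have := hperm.length_eq
    simpa using this
  have hnodup : a.Nodup := hperm.nodup_iff.2 List.nodup_range'
  -- values are in [1, n]
  have hval : ∀ {t : ℕ}, 1 ≤ t → t ≤ n → 1 ≤ a.getD (t-1) 0 ∧ a.getD (t-1) 0 ≤ n := by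
    intro t h1 h2
    have h3 : t - 1 < a.length := by omega
    have hmem : a.getD (t-1) 0 ∈ a := by
      rw [List.getD_eq_getElem?_getD, List.getElem?_eq_getElem h3]
      exact List.getElem_mem _
    have := hperm.mem_iff.1 hmem
    rw [List.mem_range'_1] at this
    omega
  -- value injectivity
  have hvinj : ∀ {t t' : ℕ}, 1 ≤ t → t ≤ n → 1 ≤ t' → t' ≤ n →
      a.getD (t-1) 0 = a.getD (t'-1) 0 → t = t' := by
    intro t t' h1 h2 h1' h2' hv
    have h3 : t-1 < a.length := by omega
    have h3' : t'-1 < a.length := by omega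
    rw [List.getD_eq_getElem?_getD, List.getElem?_eq_getElem h3,
      List.getD_eq_getElem?_getD, List.getElem?_eq_getElem h3'] at hv
    simp only [Option.getD_some] at hv
    have := (hnodup.getElem_inj_iff).1 hv
    omega
  -- grid bounds
  have hI1 : ∀ {t : ℕ}, 1 ≤ t → t ≤ n → 1 ≤ gridI a t := by
    intro t h1 h2
    rw [gridI_eq]
    exact gridSet_sSup_pos h1 (by omega)
  have hIl : ∀ {t : ℕ}, 1 ≤ t → t ≤ n → gridI a t ≤ ℓ := by
    intro t h1 h2
    rw [gridI_eq]
    exact gridSet_sSup_le h1 (by omega) hdec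
  have hJ1 : ∀ {t : ℕ}, 1 ≤ t → t ≤ n → 1 ≤ gridJ a t := by
    intro t h1 h2
    rw [gridJ_eq]
    exact gridSet_sSup_pos h1 (by omega)
  have hJk : ∀ {t : ℕ}, 1 ≤ t → t ≤ n → gridJ a t ≤ k := by
    intro t h1 h2
    rw [gridJ_eq]
    exact gridSet_sSup_le h1 (by omega) hinc
  -- step lemmas
  have hstepJ : ∀ {t t' : ℕ}, 1 ≤ t → t < t' → t' ≤ n →
      a.getD (t-1) 0 < a.getD (t'-1) 0 → gridJ a t < gridJ a t' := by
    intro t t' h1 ht h2 hv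
    rw [gridJ_eq, gridJ_eq]
    exact gridSet_sSup_lt (fun _ _ _ h h' => h.trans h') h1 ht (by omega) hv
  have hstepI : ∀ {t t' : ℕ}, 1 ≤ t → t < t' → t' ≤ n →
      a.getD (t'-1) 0 < a.getD (t-1) 0 → gridI a t < gridI a t' := by
    intro t t' h1 ht h2 hv
    rw [gridI_eq, gridI_eq]
    exact gridSet_sSup_lt (fun _ _ _ h h' => h'.trans h) h1 ht (by omega) hv
  -- gamma injectivity
  have hγinj : ∀ {t t' : ℕ}, 1 ≤ t → t ≤ n → 1 ≤ t' → t' ≤ n →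
      gridI a t = gridI a t' → gridJ a t = gridJ a t' → t = t' := by
    intro t t' h1 h2 h1' h2' hIeq hJeq
    rcases Nat.lt_trichotomy t t' with ht | ht | ht
    · rcases Nat.lt_trichotomy (a.getD (t-1) 0) (a.getD (t'-1) 0) with hv | hv | hv
      · exact absurd (hstepJ h1 ht h2') (by omega)
      · exact hvinj h1 h2 h1' h2' hv
      · exact absurd (hstepI h1 ht h2') (by omega)
    · exact ht
    · rcases Nat.lt_trichotomy (a.getD (t'-1) 0) (a.getD (t-1) 0) with hv | hv | hv
      · exact absurd (hstepJ h1' ht h2) (by omega)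
      · exact (hvinj h1' h2' h1 h2 hv).symm
      · exact absurd (hstepI h1' ht h2) (by omega)
  -- unpack hr
  have hrt : ∀ {i j : ℕ}, 1 ≤ i → i ≤ ℓ → 1 ≤ j → j ≤ k →
      (1 ≤ r i j ∧ r i j ≤ n) ∧ gridI a (r i j) = i ∧ gridJ a (r i j) = j := by
    intro i j hi1 hi2 hj1 hj2
    have := hr i (Finset.mem_Icc.2 ⟨hi1, hi2⟩) j (Finset.mem_Icc.2 ⟨hj1, hj2⟩)
    exact ⟨Finset.mem_Icc.1 this.1, this.2⟩
  refine ⟨⟨?_, ?_, ?_⟩, ?_, ?_⟩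
  · -- MapsTo
    intro p hp
    simp only [Finset.coe_product, Set.mem_prod, Finset.mem_coe, Finset.mem_Icc] at hp
    obtain ⟨⟨hi1, hi2⟩, hj1, hj2⟩ := hp
    obtain ⟨⟨ht1, ht2⟩, -, -⟩ := hrt (i := ℓ+1-p.1) (j := p.2)
      (by omega) (by omega) hj1 hj2
    have := hval ht1 ht2
    simp only [Finset.coe_Icc, Set.mem_Icc]
    omega
  · -- InjOn
    intro p hp q hq h
    simp only [Finset.coe_product, Set.mem_prod, Finset.mem_coe, Finset.mem_Icc] at hp hq
    obtain ⟨⟨hpi1, hpi2⟩, hpj1, hpj2⟩ := hp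
    obtain ⟨⟨hqi1, hqi2⟩, hqj1, hqj2⟩ := hq
    obtain ⟨⟨ht1, ht2⟩, hIp, hJp⟩ := hrt (i := ℓ+1-p.1) (j := p.2)
      (by omega) (by omega) hpj1 hpj2
    obtain ⟨⟨ht1', ht2'⟩, hIq, hJq⟩ := hrt (i := ℓ+1-q.1) (j := q.2)
      (by omega) (by omega) hqj1 hqj2
    have heq : r (ℓ+1-p.1) p.2 = r (ℓ+1-q.1) q.2 :=
      hvinj ht1 ht2 ht1' ht2' h
    rw [heq] at hIp hJp
    have h1 : p.1 = q.1 := by omega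
    have h2 : p.2 = q.2 := by omega
    exact Prod.ext h1 h2
  · -- SurjOn
    intro v hv
    simp only [Finset.coe_Icc, Set.mem_Icc] at hv
    have hva : v ∈ a := hperm.mem_iff.2 (List.mem_range'_1.2 (by omega))
    obtain ⟨idx, hidx, hvidx⟩ := List.mem_iff_getElem.1 hva
    set t := idx + 1 with htdef
    have ht1 : 1 ≤ t := by omega
    have ht2 : t ≤ n := by omega
    have hvt : a.getD (t-1) 0 = v := by
      have h3 : t - 1 < a.length := by omega
      rw [List.getD_eq_getElem?_getD, List.getElem?_eq_getElem h3]
      simpa [htdef] using hvidx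
    have hI := hI1 ht1 ht2
    have hIl' := hIl ht1 ht2
    have hJ := hJ1 ht1 ht2
    have hJk' := hJk ht1 ht2
    refine ⟨(ℓ+1-gridI a t, gridJ a t), ?_, ?_⟩
    · simp only [Finset.coe_product, Set.mem_prod, Finset.mem_coe, Finset.mem_Icc]
      omega
    · obtain ⟨⟨ht1', ht2'⟩, hIr, hJr⟩ := hrt (i := ℓ+1-(ℓ+1-gridI a t))
        (j := gridJ a t) (by omega) (by omega) hJ hJk'
      have h6 : ℓ+1-(ℓ+1-gridI a t) = gridI a t := by omega
      rw [h6] at ht1' ht2' hIr hJr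
      have heq := hγinj ht1' ht2' ht1 ht2 hIr hJr
      show a.getD (r (ℓ+1-(ℓ+1-gridI a t)) (gridJ a t) - 1) 0 = v
      rw [h6, heq, hvt]
  · -- rows increasing
    intro i hi j hj j' hj' hjj'
    rw [Finset.mem_Icc] at hi hj hj'
    obtain ⟨⟨ht1, ht2⟩, hIt, hJt⟩ := hrt (i := ℓ+1-i) (j := j)
      (by omega) (by omega) hj.1 hj.2
    obtain ⟨⟨ht1', ht2'⟩, hIt', hJt'⟩ := hrt (i := ℓ+1-i) (j := j')
      (by omega) (by omega) hj'.1 hj'.2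
    set t := r (ℓ+1-i) j
    set t' := r (ℓ+1-i) j'
    rcases Nat.lt_trichotomy t t' with ht | ht | ht
    · rcases Nat.lt_trichotomy (a.getD (t-1) 0) (a.getD (t'-1) 0) with hv | hv | hv
      · exact hv
      · exact absurd (hvinj ht1 ht2 ht1' ht2' hv) (by omega)
      · exact absurd (hstepI ht1 ht ht2' hv) (by omega)
    · rw [ht] at hJt; omega
    · rcases Nat.lt_trichotomy (a.getD (t'-1) 0) (a.getD (t-1) 0) with hv | hv | hv
      · exact absurd (hstepJ ht1' ht ht2 hv) (by omega)
      · exact absurd (hvinj ht1' ht2' ht1 ht2 hv) (by omega)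
      · exact hv
  · -- columns increasing
    intro i hi i' hi' j hj hii'
    rw [Finset.mem_Icc] at hi hi' hj
    obtain ⟨⟨ht1, ht2⟩, hIt, hJt⟩ := hrt (i := ℓ+1-i) (j := j)
      (by omega) (by omega) hj.1 hj.2
    obtain ⟨⟨ht1', ht2'⟩, hIt', hJt'⟩ := hrt (i := ℓ+1-i') (j := j)
      (by omega) (by omega) hj.1 hj.2
    set t := r (ℓ+1-i) j
    set t' := r (ℓ+1-i') j
    rcases Nat.lt_trichotomy t t' with ht | ht | ht
    · rcases Nat.lt_trichotomy (a.getD (t-1) 0) (a.getD (t'-1) 0) with hv | hv | hv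
      · exact absurd (hstepJ ht1 ht ht2' hv) (by omega)
      · exact absurd (hvinj ht1 ht2 ht1' ht2' hv) (by omega)
      · exact absurd (hstepI ht1 ht ht2' hv) (by omega)
    · rw [ht] at hIt; omega
    · rcases Nat.lt_trichotomy (a.getD (t'-1) 0) (a.getD (t-1) 0) with hv | hv | hv
      · exact absurd (hstepJ ht1' ht ht2 hv) (by omega)
      · exact absurd (hvinj ht1' ht2' ht1 ht2 hv) (by omega)
      · exact hv
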